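/- arXiv:1910.00851 — 5 statements merged into one kernel-verified Lean document; each statement's English description precedes it below -/
import Mathlib

section
/- Let X = [[1,1],[0,1]] and Y = [[1,0],[1,1]] in SL₂(ℤ). For integers p, q, r, s with p+r ≥ 4 and q+s ≥ 4, the matrix [[-1,-(p+r-2)],[q+s-2,(p+r-2)(q+s-2)-1]] is conjugate in GL₂(ℤ) to the product X^(p+r-4) · Y · X^(q+s-4) · Y. -/
lemma Xpow (n : ℕ) : (!![(1 : ℤ), 1; 0, 1]) ^ n = !![(1 : ℤ), (n : ℤ); 0, 1] := by
  induction n with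
  | zero => simp [Matrix.one_fin_two]
  | succ k ih =>
      rw [pow_succ, ih]
      push_cast
      rw [Matrix.mul_fin_two]
      norm_num [add_comm]

/-- The divide monodromy matrix for the cross divide is conjugate in `GL₂(ℤ)`
to `X^(p+r-4) · Y · X^(q+s-4) · Y`. -/
theorem stmt4 (p q r s : ℤ) (h1 : 4 ≤ p + r) (h2 : 4 ≤ q + s) :
    ∃ P : (Matrix (Fin 2) (Fin 2) ℤ)ˣ,
      (P : Matrix (Fin 2) (Fin 2) ℤ) *
          !![(-1 : ℤ), -(p + r - 2); q + s - 2, (p + r - 2) * (q + s - 2) - 1] *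
          ((P⁻¹ : (Matrix (Fin 2) (Fin 2) ℤ)ˣ) : Matrix (Fin 2) (Fin 2) ℤ) =
        (!![(1 : ℤ), 1; 0, 1]) ^ (p + r - 4).toNat * !![(1 : ℤ), 0; 1, 1] *
          (!![(1 : ℤ), 1; 0, 1]) ^ (q + s - 4).toNat * !![(1 : ℤ), 0; 1, 1] := by
  set a : ℤ := p + r - 4 with ha
  set b : ℤ := q + s - 4 with hb
  have haN : ((a.toNat : ℤ)) = a := Int.toNat_of_nonneg (by omega)
  have hbN : ((b.toNat : ℤ)) = b := Int.toNat_of_nonneg (by omega)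
  set A : ℤ := a + 2 with hA
  set B : ℤ := b + 2 with hB
  -- the conjugating matrix
  refine ⟨⟨!![(a+1)*B - 1, (a+1)*(A*B-1) - A; B, A*B - 1],
          !![A*B - 1, -((a+1)*(A*B-1) - A); -B, (a+1)*B - 1], ?_, ?_⟩, ?_⟩
  · rw [Matrix.mul_fin_two, Matrix.one_fin_two]
    congr 1 <;> ring
  · rw [Matrix.mul_fin_two, Matrix.one_fin_two]
    congr 1 <;> ring
  · show !![(a+1)*B - 1, (a+1)*(A*B-1) - A; B, A*B - 1] *
        !![(-1 : ℤ), -(p + r - 2); q + s - 2, (p + r - 2) * (q + s - 2) - 1] *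
        !![A*B - 1, -((a+1)*(A*B-1) - A); -B, (a+1)*B - 1] = _
    rw [Xpow, Xpow, haN, hbN]
    have hpr : p + r - 2 = A := by omega
    have hqs : q + s - 2 = B := by omega
    rw [hpr, hqs, Matrix.mul_fin_two, Matrix.mul_fin_two, Matrix.mul_fin_two,
      Matrix.mul_fin_two, Matrix.mul_fin_two]
    congr 1 <;> simp only [hA, hB] <;> ring
end

section
/- The polynomial p(x) = x¹² − 4x¹¹ − 4x¹⁰ − 4x⁹ − 4x⁸ − 4x⁷ − 14x⁶ − 4x⁵ − 4x⁴ − 4x³ − 4x² − 4x + 1 has a complex root z with |z| = 1 and z ∉ ℝ, and also a complex root w with w ∉ ℝ and |w| ≠ 1. -/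
/-- The characteristic polynomial of the even ping-pong monodromy with 11
squares on the `(2,6,16)`-orbifold, as a function on `ℂ`. -/
def pingpongPolyC (x : ℂ) : ℂ :=
  x ^ 12 - 4 * x ^ 11 - 4 * x ^ 10 - 4 * x ^ 9 - 4 * x ^ 8 - 4 * x ^ 7 -
    14 * x ^ 6 - 4 * x ^ 5 - 4 * x ^ 4 - 4 * x ^ 3 - 4 * x ^ 2 - 4 * x + 1

/-- The reduced (trace-coordinate) polynomial over `ℝ`. -/
def QR (y : ℝ) : ℝ :=
  y ^ 6 - 4 * y ^ 5 - 10 * y ^ 4 + 16 * y ^ 3 + 21 * y ^ 2 - 12 * y - 16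

/-- The reduced polynomial over `ℂ`. -/
def QC (y : ℂ) : ℂ :=
  y ^ 6 - 4 * y ^ 5 - 10 * y ^ 4 + 16 * y ^ 3 + 21 * y ^ 2 - 12 * y - 16

lemma QC_ofReal (y : ℝ) : QC (y : ℂ) = ((QR y : ℝ) : ℂ) := by
  simp only [QC, QR]; push_cast; ring

/-- Palindromic reduction identity. -/
lemma pingpong_eq (x : ℂ) (hx : x ≠ 0) :
    pingpongPolyC x = x ^ 6 * QC (x + x⁻¹) := by
  have h : x * x⁻¹ = 1 := mul_inv_cancel₀ hx
  simp only [pingpongPolyC, QC]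
  linear_combination (- 6 * x ^ 10 - 15 * x ^ 9 * x⁻¹ + 20 * x ^ 9 - 20 * x ^ 8 * x⁻¹ ^ 2 + 40 * x ^ 8 * x⁻¹ + 25 * x ^ 8 - 15 * x ^ 7 * x⁻¹ ^ 3 + 40 * x ^ 7 * x⁻¹ ^ 2 + 40 * x ^ 7 * x⁻¹ - 8 * x ^ 7 - 6 * x ^ 6 * x⁻¹ ^ 4 + 20 * x ^ 6 * x⁻¹ ^ 3 + 25 * x ^ 6 * x⁻¹ ^ 2 - 8 * x ^ 6 * x⁻¹ - 2 * x ^ 6 - 1 * x ^ 5 * x⁻¹ ^ 5 + 4 * x ^ 5 * x⁻¹ ^ 4 + 4 * x ^ 5 * x⁻¹ ^ 3 + 4 * x ^ 5 * x⁻¹ ^ 2 + 4 * x ^ 5 * x⁻¹ + 4 * x ^ 5 - 1 * x ^ 4 * x⁻¹ ^ 4 + 4 * x ^ 4 * x⁻¹ ^ 3 + 4 * x ^ 4 * x⁻¹ ^ 2 + 4 * x ^ 4 * x⁻¹ + 4 * x ^ 4 - 1 * x ^ 3 * x⁻¹ ^ 3 + 4 * x ^ 3 * x⁻¹ ^ 2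 + 4 * x ^ 3 * x⁻¹ + 4 * x ^ 3 - 1 * x ^ 2 * x⁻¹ ^ 2 + 4 * x ^ 2 * x⁻¹ + 4 * x ^ 2 - 1 * x * x⁻¹ + 4 * x - 1) * h

/-- Quotient of `QC` by `(y - a)`. -/
def q1 (a y : ℂ) : ℂ :=
  y ^ 5 + (a - 4) * y ^ 4 + (a ^ 2 - 4 * a - 10) * y ^ 3 +
    (a ^ 3 - 4 * a ^ 2 - 10 * a + 16) * y ^ 2 +
    (a ^ 4 - 4 * a ^ 3 - 10 * a ^ 2 + 16 * a + 21) * y +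
    (a ^ 5 - 4 * a ^ 4 - 10 * a ^ 3 + 16 * a ^ 2 + 21 * a - 12)

def q2 (a b y : ℂ) : ℂ :=
  y ^ 4 + (a + b - 4) * y ^ 3 +
    (a ^ 2 + a * b - 4 * a + b ^ 2 - 4 * b - 10) * y ^ 2 +
    (a ^ 3 + a ^ 2 * b - 4 * a ^ 2 + a * b ^ 2 - 4 * a * b - 10 * a + b ^ 3 -
      4 * b ^ 2 - 10 * b + 16) * y +
    (a ^ 4 + a ^ 3 * b - 4 * a ^ 3 + a ^ 2 * b ^ 2 - 4 * a ^ 2 * b -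
      10 * a ^ 2 + a * b ^ 3 - 4 * a * b ^ 2 - 10 * a * b + 16 * a + b ^ 4 -
      4 * b ^ 3 - 10 * b ^ 2 + 16 * b + 21)

def q3 (a b c y : ℂ) : ℂ :=
  y ^ 3 + (a + b + c - 4) * y ^ 2 +
    (a ^ 2 + a * b + a * c - 4 * a + b ^ 2 + b * c - 4 * b + c ^ 2 - 4 * c -
      10) * y +
    (a ^ 3 + a ^ 2 * b + a ^ 2 * c - 4 * a ^ 2 + a * b ^ 2 + a * b * c -
      4 * a * b + a * c ^ 2 - 4 * a * c - 10 * a + b ^ 3 + b ^ 2 * c -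
      4 * b ^ 2 + b * c ^ 2 - 4 * b * c - 10 * b + c ^ 3 - 4 * c ^ 2 -
      10 * c + 16)

def q4 (a b c d y : ℂ) : ℂ :=
  y ^ 2 + (a + b + c + d - 4) * y +
    (a ^ 2 + a * b + a * c + a * d - 4 * a + b ^ 2 + b * c + b * d - 4 * b +
      c ^ 2 + c * d - 4 * c + d ^ 2 - 4 * d - 10)

lemma div1 (a y : ℂ) : QC y - QC a = (y - a) * q1 a y := by
  simp only [QC, q1]; ring

lemma div2 (a b y : ℂ) : q1 a y - q1 a b = (y - b) * q2 a b y := by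
  simp only [q1, q2]; ring

lemma div3 (a b c y : ℂ) : q2 a b y - q2 a b c = (y - c) * q3 a b c y := by
  simp only [q2, q3]; ring

lemma div4 (a b c d y : ℂ) : q3 a b c y - q3 a b c d = (y - d) * q4 a b c d y := by
  simp only [q3, q4]; ring

lemma QR_continuous : Continuous QR := by
  unfold QR; fun_prop

/-- A monic real quadratic with negative discriminant has a non-real complex
root. -/
lemma quad_root (p q : ℝ) (h : p ^ 2 < 4 * q) :
    ∃ y : ℂ, y ^ 2 + (p : ℂ) * y + (q : ℂ) = 0 ∧ y.im ≠ 0 := by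
  set s : ℝ := Real.sqrt (4 * q - p ^ 2) with hsdef
  have hspos : 0 < s := Real.sqrt_pos.mpr (by linarith)
  have hs2 : ((s : ℂ)) ^ 2 = 4 * (q : ℂ) - (p : ℂ) ^ 2 := by
    rw [← Complex.ofReal_pow, Real.sq_sqrt (by linarith)]
    push_cast; ring
  refine ⟨(-(p : ℂ) + (s : ℂ) * Complex.I) / 2, ?_, ?_⟩
  · linear_combination (Complex.I ^ 2 / 4) * hs2 +
      ((4 * (q : ℂ) - (p : ℂ) ^ 2) / 4) * Complex.I_sq
  · have him : ((-(p : ℂ) + (s : ℂ) * Complex.I) / 2).im = s / 2 := by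
      simp [Complex.div_im]
    rw [him]
    positivity

/-- From a real root `y₀` of `QR` with `|y₀| < 2`, produce a non-real
unit-circle root of `pingpongPolyC`. -/
lemma circle_root {y₀ : ℝ} (h : QR y₀ = 0) (h2 : y₀ ^ 2 < 4) :
    ∃ z : ℂ, pingpongPolyC z = 0 ∧ ‖z‖ = 1 ∧ z.im ≠ 0 := by
  set t : ℝ := Real.sqrt (4 - y₀ ^ 2) with ht
  have htpos : 0 < t := Real.sqrt_pos.mpr (by linarith)
  have ht2 : t ^ 2 = 4 - y₀ ^ 2 := Real.sq_sqrt (by linarith)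
  set z : ℂ := ⟨y₀ / 2, t / 2⟩ with hz
  have hre : z.re = y₀ / 2 := rfl
  have him : z.im = t / 2 := rfl
  have hnsq : Complex.normSq z = 1 := by
    simp only [Complex.normSq_apply, hre, him]
    nlinarith [ht2]
  have habs : ‖z‖ = 1 := by
    rw [Complex.norm_def, hnsq, Real.sqrt_one]
  have hz0 : z ≠ 0 := by
    intro h0
    have : z.im = 0 := by rw [h0]; rfl
    rw [him] at this; linarith
  have hinv : z⁻¹ = starRingEnd ℂ z := by
    apply inv_eq_of_mul_eq_one_right
    rw [Complex.mul_conj, hnsq]; norm_num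
  have hsum : z + z⁻¹ = (y₀ : ℂ) := by
    rw [hinv, Complex.add_conj, hre]
    push_cast; ring
  refine ⟨z, ?_, habs, ?_⟩
  · rw [pingpong_eq z hz0, hsum, QC_ofReal, h]
    simp
  · rw [him]; positivity

/-- The polynomial has a non-real root on the unit circle, and a non-real root
off the unit circle. -/
theorem stmt13 :
    (∃ z : ℂ, pingpongPolyC z = 0 ∧ ‖z‖ = 1 ∧ z.im ≠ 0) ∧
    (∃ w : ℂ, pingpongPolyC w = 0 ∧ w.im ≠ 0 ∧ ‖w‖ ≠ 1) := by
  -- locate four real roots of QR by the intermediate value theorem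
  obtain ⟨a, ha_mem, ha⟩ : ∃ a ∈ Set.Icc (-2.038 : ℝ) (-2.037), QR a = 0 := by
    have h := intermediate_value_Icc' (by norm_num : (-2.038 : ℝ) ≤ -2.037)
      QR_continuous.continuousOn
    have h0 : (0 : ℝ) ∈ Set.Icc (QR (-2.037)) (QR (-2.038)) := by
      constructor <;> (unfold QR; norm_num)
    obtain ⟨x, hx, hfx⟩ := h h0
    exact ⟨x, hx, hfx⟩
  obtain ⟨b, hb_mem, hb⟩ : ∃ b ∈ Set.Icc (1.219 : ℝ) 1.22, QR b = 0 := by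
    have h := intermediate_value_Icc (by norm_num : (1.219 : ℝ) ≤ 1.22)
      QR_continuous.continuousOn
    have h0 : (0 : ℝ) ∈ Set.Icc (QR 1.219) (QR 1.22) := by
      constructor <;> (unfold QR; norm_num)
    obtain ⟨x, hx, hfx⟩ := h h0
    exact ⟨x, hx, hfx⟩
  obtain ⟨c, hc_mem, hc⟩ : ∃ c ∈ Set.Icc (1.389 : ℝ) 1.39, QR c = 0 := by
    have h := intermediate_value_Icc' (by norm_num : (1.389 : ℝ) ≤ 1.39)
      QR_continuous.continuousOn
    have h0 : (0 : ℝ) ∈ Set.Icc (QR 1.39) (QR 1.389) := by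
      constructor <;> (unfold QR; norm_num)
    obtain ⟨x, hx, hfx⟩ := h h0
    exact ⟨x, hx, hfx⟩
  obtain ⟨d, hd_mem, hd⟩ : ∃ d ∈ Set.Icc (5.202 : ℝ) 5.203, QR d = 0 := by
    have h := intermediate_value_Icc (by norm_num : (5.202 : ℝ) ≤ 5.203)
      QR_continuous.continuousOn
    have h0 : (0 : ℝ) ∈ Set.Icc (QR 5.202) (QR 5.203) := by
      constructor <;> (unfold QR; norm_num)
    obtain ⟨x, hx, hfx⟩ := h h0
    exact ⟨x, hx, hfx⟩
  obtain ⟨ha1, ha2⟩ := ha_mem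
  obtain ⟨hb1, hb2⟩ := hb_mem
  obtain ⟨hc1, hc2⟩ := hc_mem
  obtain ⟨hd1, hd2⟩ := hd_mem
  refine ⟨circle_root hb (by nlinarith), ?_⟩
  -- complex root conditions
  have hAC : QC (a : ℂ) = 0 := by rw [QC_ofReal, ha]; norm_num
  have hBC : QC (b : ℂ) = 0 := by rw [QC_ofReal, hb]; norm_num
  have hCC : QC (c : ℂ) = 0 := by rw [QC_ofReal, hc]; norm_num
  have hDC : QC (d : ℂ) = 0 := by rw [QC_ofReal, hd]; norm_num
  -- distinctness (as complex numbers)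
  have hba : ((b : ℂ)) - (a : ℂ) ≠ 0 :=
    sub_ne_zero.mpr (by exact_mod_cast (show b ≠ a by intro hEq; rw [hEq] at hb1; linarith))
  have hca : ((c : ℂ)) - (a : ℂ) ≠ 0 :=
    sub_ne_zero.mpr (by exact_mod_cast (show c ≠ a by intro hEq; rw [hEq] at hc1; linarith))
  have hda : ((d : ℂ)) - (a : ℂ) ≠ 0 :=
    sub_ne_zero.mpr (by exact_mod_cast (show d ≠ a by intro hEq; rw [hEq] at hd1; linarith))
  have hcb : ((c : ℂ)) - (b : ℂ) ≠ 0 :=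
    sub_ne_zero.mpr (by exact_mod_cast (show c ≠ b by intro hEq; rw [hEq] at hc1; linarith))
  have hdb : ((d : ℂ)) - (b : ℂ) ≠ 0 :=
    sub_ne_zero.mpr (by exact_mod_cast (show d ≠ b by intro hEq; rw [hEq] at hd1; linarith))
  have hdc : ((d : ℂ)) - (c : ℂ) ≠ 0 :=
    sub_ne_zero.mpr (by exact_mod_cast (show d ≠ c by intro hEq; rw [hEq] at hd1; linarith))
  -- successive synthetic division: remaining quadratic factor
  have hq1 : ∀ y : ℂ, QC y = (y - a) * q1 a y := by
    intro y
    have e := div1 (a : ℂ) y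
    rw [hAC, sub_zero] at e
    exact e
  have hq1b : q1 (a : ℂ) (b : ℂ) = 0 := by
    have e := hq1 (b : ℂ)
    rw [hBC] at e
    rcases mul_eq_zero.mp e.symm with h | h
    · exact absurd h hba
    · exact h
  have hq2 : ∀ y : ℂ, q1 (a : ℂ) y = (y - b) * q2 a b y := by
    intro y
    have e := div2 (a : ℂ) (b : ℂ) y
    rw [hq1b, sub_zero] at e
    exact e
  have hq2c : q2 (a : ℂ) (b : ℂ) (c : ℂ) = 0 := by
    have e := hq1 (c : ℂ)
    rw [hCC, hq2 (c : ℂ)] at e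
    rcases mul_eq_zero.mp e.symm with h | h
    · exact absurd h hca
    · rcases mul_eq_zero.mp h with h' | h'
      · exact absurd h' hcb
      · exact h'
  have hq3 : ∀ y : ℂ, q2 (a : ℂ) (b : ℂ) y = (y - c) * q3 a b c y := by
    intro y
    have e := div3 (a : ℂ) (b : ℂ) (c : ℂ) y
    rw [hq2c, sub_zero] at e
    exact e
  have hq3d : q3 (a : ℂ) (b : ℂ) (c : ℂ) (d : ℂ) = 0 := by
    have e := hq1 (d : ℂ)
    rw [hDC, hq2 (d : ℂ), hq3 (d : ℂ)] at e
    rcases mul_eq_zero.mp e.symm with h | h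
    · exact absurd h hda
    · rcases mul_eq_zero.mp h with h' | h'
      · exact absurd h' hdb
      · rcases mul_eq_zero.mp h' with h'' | h''
        · exact absurd h'' hdc
        · exact h''
  have hq4fac : ∀ y : ℂ, q3 (a : ℂ) (b : ℂ) (c : ℂ) y = (y - d) * q4 a b c d y := by
    intro y
    have e := div4 (a : ℂ) (b : ℂ) (c : ℂ) (d : ℂ) y
    rw [hq3d, sub_zero] at e
    exact e
  -- negative discriminant of the quadratic factor
  set pR : ℝ := a + b + c + d - 4 with hpR
  set qR : ℝ := a ^ 2 + a * b + a * c + a * d - 4 * a + b ^ 2 + b * c + b * d -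
      4 * b + c ^ 2 + c * d - 4 * c + d ^ 2 - 4 * d - 10 with hqR
  have hdisc : pR ^ 2 < 4 * qR := by
    rw [hpR, hqR]
    nlinarith [ha1, ha2, hb1, hb2, hc1, hc2, hd1, hd2, sq_nonneg (a + 2.0375),
      sq_nonneg (b - 1.2195), sq_nonneg (c - 1.3895), sq_nonneg (d - 5.2025)]
  obtain ⟨y, hyroot, hyim⟩ := quad_root pR qR hdisc
  have hq4y : q4 (a : ℂ) (b : ℂ) (c : ℂ) (d : ℂ) y = 0 := by
    have : q4 (a : ℂ) (b : ℂ) (c : ℂ) (d : ℂ) y =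
        y ^ 2 + ((pR : ℝ) : ℂ) * y + ((qR : ℝ) : ℂ) := by
      rw [hpR, hqR]
      simp only [q4]
      push_cast
      ring
    rw [this, hyroot]
  have hQCy : QC y = 0 := by
    rw [hq1 y, hq2 y, hq3 y, hq4fac y, hq4y]
    ring
  -- build the root of pingpongPolyC from y
  obtain ⟨s, hs⟩ := IsAlgClosed.exists_pow_nat_eq (y ^ 2 - 4) (n := 2) (by norm_num)
  set w : ℂ := (y + s) / 2 with hw
  have hww : w * ((y - s) / 2) = 1 := by
    rw [hw]
    linear_combination (-(1 : ℂ) / 4) * hs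
  have hw0 : w ≠ 0 := by
    intro h0
    rw [h0, zero_mul] at hww
    exact zero_ne_one hww
  have hwinv : w⁻¹ = (y - s) / 2 := inv_eq_of_mul_eq_one_right hww
  have hwsum : w + w⁻¹ = y := by
    rw [hwinv, hw]; ring
  refine ⟨w, ?_, ?_, ?_⟩
  · rw [pingpong_eq w hw0, hwsum, hQCy, mul_zero]
  · intro h0
    apply hyim
    have h1 : (w⁻¹).im = 0 := by
      rw [Complex.inv_im, h0]
      simp
    rw [← hwsum, Complex.add_im, h0, h1, add_zero]
  · intro h1
    apply hyim
    have hnsq : Complex.normSq w = 1 := by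
      rw [Complex.normSq_eq_norm_sq, h1]; norm_num
    have hmul : w * starRingEnd ℂ w = 1 := by
      rw [Complex.mul_conj, hnsq, Complex.ofReal_one]
    have hinv2 : w⁻¹ = starRingEnd ℂ w := inv_eq_of_mul_eq_one_right hmul
    rw [← hwsum, Complex.add_im, hinv2, Complex.conj_im]
    ring
end

section
/- Let z ∈ ℂ with z ∉ ℝ, and let k ≥ 1 be an integer with z^k ∈ ℝ. Then (conj z)^k = z^k. Consequently, if λ is a real algebraic number whose minimal polynomial over ℚ is irreducible with a non-real Galois conjugate z satisfying |z| ≠ 1, and if deg(λ^k) = deg(λ), then z^k ∉ ℝ ∪ S¹ (where S¹ denotes the unit circle). -/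
open Polynomial IntermediateField

private lemma aux_mem (lam : ℝ) (k : ℕ) (h : IsAlgebraic ℚ lam)
    (hdeg : (minpoly ℚ (lam ^ k)).natDegree = (minpoly ℚ lam).natDegree) :
    ∃ g : ℚ[X], aeval (lam ^ k) g = lam := by
  have hint : IsIntegral ℚ lam := h.isIntegral
  have hintk : IsIntegral ℚ (lam ^ k) := hint.pow k
  have hle : ℚ⟮lam ^ k⟯ ≤ ℚ⟮lam⟯ := by
    rw [adjoin_simple_le_iff]
    exact pow_mem (mem_adjoin_simple_self ℚ lam) k
  have : FiniteDimensional ℚ ℚ⟮lam⟯ := adjoin.finiteDimensional hint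
  have heq : ℚ⟮lam ^ k⟯ = ℚ⟮lam⟯ := eq_of_le_of_finrank_eq hle (by
    rw [adjoin.finrank hintk, adjoin.finrank hint, hdeg])
  have hmem : lam ∈ ℚ⟮lam ^ k⟯ := heq ▸ mem_adjoin_simple_self ℚ lam
  have hmem2 : lam ∈ (ℚ⟮lam ^ k⟯).toSubalgebra := hmem
  rw [adjoin_simple_toSubalgebra_of_isAlgebraic hintk.isAlgebraic,
    Algebra.adjoin_singleton_eq_range_aeval] at hmem2
  exact hmem2

/-- If `z ∉ ℝ` and `z^k ∈ ℝ` for some `k ≥ 1`, then `(conj z)^k = z^k`.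
Consequently, if `λ` is a real algebraic number with a non-real Galois
conjugate `z` with `|z| ≠ 1`, and there is no degree drop from `λ` to `λ^k`,
then `z^k ∉ ℝ ∪ S¹`. -/
theorem stmt14 :
    (∀ (z : ℂ) (k : ℕ), z.im ≠ 0 → 1 ≤ k → (z ^ k).im = 0 →
      (starRingEnd ℂ z) ^ k = z ^ k) ∧
    (∀ (lam : ℝ) (z : ℂ) (k : ℕ), IsAlgebraic ℚ lam → 1 ≤ k →
      Polynomial.aeval z (minpoly ℚ lam) = 0 → z.im ≠ 0 → ‖z‖ ≠ 1 →
      (minpoly ℚ (lam ^ k)).natDegree = (minpoly ℚ lam).natDegree →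
      (z ^ k).im ≠ 0 ∧ ‖z ^ k‖ ≠ 1) := by
  have part1 : ∀ (z : ℂ) (k : ℕ), z.im ≠ 0 → 1 ≤ k → (z ^ k).im = 0 →
      (starRingEnd ℂ z) ^ k = z ^ k := by
    intro z k _ _ h3
    rw [← map_pow]
    exact Complex.conj_eq_iff_im.mpr h3
  refine ⟨part1, ?_⟩
  intro lam z k halg hk hz him habs hdeg
  constructor
  · -- z^k not real
    intro him0
    obtain ⟨g, hg⟩ := aux_mem lam k halg hdeg
    set P : ℚ[X] := X - g.comp (X ^ k) with hP
    have hPlam : aeval lam P = 0 := by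
      simp [hP, Polynomial.aeval_comp, hg]
    obtain ⟨q, hq⟩ := minpoly.dvd ℚ lam hPlam
    -- roots of minpoly satisfy P
    have hroot : ∀ w : ℂ, aeval w (minpoly ℚ lam) = 0 → w = aeval (w ^ k) g := by
      intro w hw
      have : aeval w P = 0 := by rw [hq, map_mul, hw, zero_mul]
      have := this
      rw [hP] at this
      simp only [map_sub, aeval_X, Polynomial.aeval_comp, aeval_X_pow, sub_eq_zero] at this
      exact this
    have hzg : z = aeval (z ^ k) g := hroot z hz
    -- conj z is also a root
    have hconj : aeval (starRingEnd ℂ z) (minpoly ℚ lam) = 0 := by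
      have := Polynomial.aeval_algHom_apply
        ((starRingEnd ℂ).toRatAlgHom) z (minpoly ℚ lam)
      simpa [hz] using this
    have hczg : starRingEnd ℂ z = aeval ((starRingEnd ℂ z) ^ k) g := hroot _ hconj
    have hck : (starRingEnd ℂ z) ^ k = z ^ k := part1 z k him hk him0
    rw [hck, ← hzg] at hczg
    exact him (by simpa [Complex.conj_eq_iff_im] using hczg)
  · -- abs z^k ≠ 1
    intro h1
    apply habs
    rw [norm_pow] at h1
    have h0 : (0 : ℝ) ≤ ‖z‖ := norm_nonneg z
    rcases lt_trichotomy ‖z‖ 1 with h | h | h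
    · exact absurd h1 (ne_of_lt (pow_lt_one₀ h0 h (by omega)))
    · exact h
    · exact absurd h1 (ne_of_gt (one_lt_pow₀ h (by omega)))
end

section
/- Let λ be a real algebraic number of degree d with minimal polynomial m over ℚ, let k ≥ 1, and suppose ℚ(λ^k) = ℚ(λ). Then the set of Galois conjugates of λ^k is exactly {μ^k : μ a Galois conjugate of λ}. In particular, if some Galois conjugate of λ lies on the unit circle, then some Galois conjugate of λ^k lies on the unit circle. -/
open IntermediateField Polynomial

/-- Strenner's lemma: if `ℚ(λ^k) = ℚ(λ)`, then the Galois conjugates of `λ^k`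
are exactly the `k`-th powers of the Galois conjugates of `λ`; in particular a
conjugate on the unit circle yields a conjugate of `λ^k` on the unit circle. -/
theorem stmt15 (lam : ℝ) (hlam : IsAlgebraic ℚ lam) (k : ℕ) (hk : 1 ≤ k)
    (hfield : IntermediateField.adjoin ℚ {lam ^ k} = IntermediateField.adjoin ℚ {lam}) :
    ({z : ℂ | Polynomial.aeval z (minpoly ℚ (lam ^ k)) = 0} =
      (fun μ : ℂ => μ ^ k) '' {z : ℂ | Polynomial.aeval z (minpoly ℚ lam) = 0}) ∧
    ((∃ z : ℂ, Polynomial.aeval z (minpoly ℚ lam) = 0 ∧ ‖z‖ = 1) →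
      ∃ w : ℂ, Polynomial.aeval w (minpoly ℚ (lam ^ k)) = 0 ∧ ‖w‖ = 1) := by
  have hint : IsIntegral ℚ lam := hlam.isIntegral
  have hintk : IsIntegral ℚ (lam ^ k) := hint.pow k
  have hmain : {z : ℂ | Polynomial.aeval z (minpoly ℚ (lam ^ k)) = 0} =
      (fun μ : ℂ => μ ^ k) '' {z : ℂ | Polynomial.aeval z (minpoly ℚ lam) = 0} := by
    ext z
    constructor
    · intro hz
      -- z is a root of minpoly of lam^k; get an embedding of ℚ⟮lam^k⟯ into ℂ
      have hzroot : z ∈ (minpoly ℚ (lam ^ k)).aroots ℂ := by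
        rw [Polynomial.mem_aroots]
        exact ⟨minpoly.ne_zero hintk, hz⟩
      set σ := (IntermediateField.algHomAdjoinIntegralEquiv ℚ hintk).symm ⟨z, hzroot⟩
      have hσgen : σ (IntermediateField.AdjoinSimple.gen ℚ (lam ^ k)) = z :=
        IntermediateField.algHomAdjoinIntegralEquiv_symm_apply_gen ℚ hintk ⟨z, hzroot⟩
      have hlam_mem : lam ∈ IntermediateField.adjoin ℚ {(lam ^ k : ℝ)} := by
        rw [hfield]
        exact IntermediateField.subset_adjoin ℚ {lam} rfl
      set x : ℚ⟮(lam ^ k : ℝ)⟯ := ⟨lam, hlam_mem⟩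
      refine ⟨σ x, ?_, ?_⟩
      · -- σ x is a root of minpoly of lam
        have hxmin : minpoly ℚ x = minpoly ℚ lam := by
          have := minpoly.algebraMap_eq (A := ℚ)
            (algebraMap (↥ℚ⟮(lam ^ k : ℝ)⟯) ℝ).injective x
          simpa using this.symm
        have : Polynomial.aeval x (minpoly ℚ x) = 0 := minpoly.aeval ℚ x
        have h2 : Polynomial.aeval (σ x) (minpoly ℚ x) = 0 := by
          rw [Polynomial.aeval_algHom_apply, this, map_zero]
        rwa [hxmin] at h2
      · -- (σ x)^k = z
        have hxk : x ^ k = IntermediateField.AdjoinSimple.gen ℚ (lam ^ k) := by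
          ext
          push_cast [x]
          rfl
        calc (σ x) ^ k = σ (x ^ k) := (map_pow σ x k).symm
          _ = z := by rw [hxk, hσgen]
    · rintro ⟨μ, hμ, rfl⟩
      have hμroot : μ ∈ (minpoly ℚ lam).aroots ℂ := by
        rw [Polynomial.mem_aroots]
        exact ⟨minpoly.ne_zero hint, hμ⟩
      set τ := (IntermediateField.algHomAdjoinIntegralEquiv ℚ hint).symm ⟨μ, hμroot⟩
      have hτgen : τ (IntermediateField.AdjoinSimple.gen ℚ lam) = μ :=
        IntermediateField.algHomAdjoinIntegralEquiv_symm_apply_gen ℚ hint ⟨μ, hμroot⟩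
      set y : ℚ⟮lam⟯ := IntermediateField.AdjoinSimple.gen ℚ lam ^ k
      have hy : (y : ℝ) = lam ^ k := by push_cast [y]; rfl
      have hymin : minpoly ℚ y = minpoly ℚ (lam ^ k) := by
        have := minpoly.algebraMap_eq (A := ℚ) (algebraMap (↥ℚ⟮lam⟯) ℝ).injective y
        rw [← this]; congr 1
      have h0 : Polynomial.aeval y (minpoly ℚ (lam ^ k)) = 0 := by
        rw [← hymin]; exact minpoly.aeval ℚ y
      show Polynomial.aeval (μ ^ k) (minpoly ℚ (lam ^ k)) = 0
      have : τ y = μ ^ k := by rw [map_pow, hτgen]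
      rw [← this, Polynomial.aeval_algHom_apply, h0, map_zero]
  refine ⟨hmain, ?_⟩
  rintro ⟨z, hz, habs⟩
  refine ⟨z ^ k, ?_, ?_⟩
  · have hm : z ^ k ∈ {w : ℂ | Polynomial.aeval w (minpoly ℚ (lam ^ k)) = 0} := by
      rw [hmain]; exact ⟨z, hz, rfl⟩
    exact hm
  · rw [norm_pow, habs, one_pow]
end

section
/- Let M be an n×n matrix with nonnegative integer entries whose columns (indexed by edges colored green, red, or blue) satisfy: the column of each green edge dominates the indicator of at least one blue edge; the column of each blue edge dominates the sum of the indicator of one red edge and two green edges; and the column of each red edge dominates the sum of three green-edge indicators and two red-edge indicators. Then for the vector w assigning weight 2 to green edges and weight 1 to red and blue edges, M·w ≥ (5/2)·w entrywise does NOT follow in general from a single such M, but for M = B·A a product of two matrices A, B each satisfying these column conditions, one has (B·A)·w ≥ (5/2)·w entrywise. -/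
/-- Edge colours: `0` is green, `1` is red, `2` is blue. The column conditions
for the transition matrix of the train track map induced by an antitwist: the
matrix has nonnegative integer entries; the column of each green edge dominates
the indicator of a blue edge; the column of each blue edge dominates the sum of
one red indicator and two green indicators; and the column of each red edge
dominates the sum of three green indicators and two red indicators. -/
def BacfiColCond {n : ℕ} (c : Fin n → Fin 3) (A : Matrix (Fin n) (Fin n) ℚ) : Prop :=
  (∀ i j, ∃ m : ℕ, A i j = (m : ℚ)) ∧
  (∀ j, c j = 0 → ∃ v : Fin n → ℕ, (∀ i, (v i : ℚ) ≤ A i j) ∧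
    1 ≤ ∑ i ∈ Finset.univ.filter (fun i => c i = 2), v i) ∧
  (∀ j, c j = 2 → ∃ v : Fin n → ℕ, (∀ i, (v i : ℚ) ≤ A i j) ∧
    1 ≤ ∑ i ∈ Finset.univ.filter (fun i => c i = 1), v i ∧
    2 ≤ ∑ i ∈ Finset.univ.filter (fun i => c i = 0), v i) ∧
  (∀ j, c j = 1 → ∃ v : Fin n → ℕ, (∀ i, (v i : ℚ) ≤ A i j) ∧
    3 ≤ ∑ i ∈ Finset.univ.filter (fun i => c i = 0), v i ∧
    2 ≤ ∑ i ∈ Finset.univ.filter (fun i => c i = 1), v i)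

/-- The weight vector assigning `2` to green edges and `1` to red and blue edges. -/
def bacfiWeight {n : ℕ} (c : Fin n → Fin 3) (i : Fin n) : ℚ :=
  if c i = 0 then 2 else 1

open Finset

lemma bacfi_filt {n : ℕ} (c : Fin n → Fin 3) (u : Fin n → ℚ) (v : Fin n → ℕ)
    (k : Fin 3) (α : ℚ) (hk : ∀ i, c i = k → α ≤ u i) :
    α * (∑ i ∈ univ.filter (fun i => c i = k), (v i : ℚ)) ≤
      ∑ i ∈ univ.filter (fun i => c i = k), u i * v i := by
  rw [Finset.mul_sum]
  refine Finset.sum_le_sum fun i hi => ?_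
  simp only [mem_filter] at hi
  exact mul_le_mul_of_nonneg_right (hk i hi.2) (by positivity)

lemma bacfi_vecMul_ge {n : ℕ} (A : Matrix (Fin n) (Fin n) ℚ)
    (u : Fin n → ℚ) (hu : ∀ i, 0 ≤ u i) (j : Fin n) (v : Fin n → ℕ)
    (hv : ∀ i, (v i : ℚ) ≤ A i j) :
    ∑ i, u i * (v i : ℚ) ≤ Matrix.vecMul u A j := by
  simp only [Matrix.vecMul, dotProduct]
  exact Finset.sum_le_sum fun i _ => mul_le_mul_of_nonneg_left (hv i) (hu i)

lemma bacfi_two_sets {n : ℕ} (c : Fin n → Fin 3) (u : Fin n → ℚ) (v : Fin n → ℕ)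
    (hu : ∀ i, 0 ≤ u i) (k k' : Fin 3) (hkk : k ≠ k') :
    (∑ i ∈ univ.filter (fun i => c i = k), u i * v i) +
    (∑ i ∈ univ.filter (fun i => c i = k'), u i * v i) ≤ ∑ i, u i * (v i : ℚ) := by
  rw [← Finset.sum_union]
  · refine Finset.sum_le_sum_of_subset_of_nonneg (Finset.subset_univ _) fun i _ _ => ?_
    exact mul_nonneg (hu i) (by positivity)
  · simp only [Finset.disjoint_filter]
    intro i _ h h'
    exact hkk (h ▸ h'.symm ▸ rfl)

lemma bacfi_one_set {n : ℕ} (c : Fin n → Fin 3) (u : Fin n → ℚ) (v : Fin n → ℕ)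
    (hu : ∀ i, 0 ≤ u i) (k : Fin 3) :
    (∑ i ∈ univ.filter (fun i => c i = k), u i * v i) ≤ ∑ i, u i * (v i : ℚ) :=
  Finset.sum_le_sum_of_subset_of_nonneg (Finset.subset_univ _)
    fun i _ _ => mul_nonneg (hu i) (by positivity)

lemma bacfi_step {n : ℕ} (c : Fin n → Fin 3) (A : Matrix (Fin n) (Fin n) ℚ)
    (hA : BacfiColCond c A) (u : Fin n → ℚ) (hu : ∀ i, 0 ≤ u i)
    (g r b : ℚ) (hg0 : 0 ≤ g) (hr0 : 0 ≤ r) (hb0 : 0 ≤ b)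
    (hg : ∀ i, c i = 0 → g ≤ u i) (hr : ∀ i, c i = 1 → r ≤ u i)
    (hb : ∀ i, c i = 2 → b ≤ u i) (j : Fin n) :
    (c j = 0 → b ≤ Matrix.vecMul u A j) ∧
    (c j = 2 → r + 2 * g ≤ Matrix.vecMul u A j) ∧
    (c j = 1 → 3 * g + 2 * r ≤ Matrix.vecMul u A j) := by
  obtain ⟨_, hgreen, hblue, hred⟩ := hA
  refine ⟨fun hj => ?_, fun hj => ?_, fun hj => ?_⟩
  · obtain ⟨v, hv, hs⟩ := hgreen j hj
    refine le_trans ?_ (bacfi_vecMul_ge A u hu j v hv)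
    refine le_trans ?_ (bacfi_one_set c u v hu 2)
    calc b = b * 1 := (mul_one b).symm
    _ ≤ b * (∑ i ∈ univ.filter (fun i => c i = 2), (v i : ℚ)) := by
        apply mul_le_mul_of_nonneg_left _ hb0
        exact_mod_cast Nat.one_le_cast.mpr hs
    _ ≤ _ := bacfi_filt c u v 2 b hb
  · obtain ⟨v, hv, hs1, hs0⟩ := hblue j hj
    refine le_trans ?_ (bacfi_vecMul_ge A u hu j v hv)
    refine le_trans ?_ (bacfi_two_sets c u v hu 1 0 (by decide))
    have h1 : r * 1 ≤ r * (∑ i ∈ univ.filter (fun i => c i = 1), (v i : ℚ)) := by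
      apply mul_le_mul_of_nonneg_left _ hr0
      exact_mod_cast Nat.one_le_cast.mpr hs1
    have h0 : g * 2 ≤ g * (∑ i ∈ univ.filter (fun i => c i = 0), (v i : ℚ)) := by
      apply mul_le_mul_of_nonneg_left _ hg0
      exact_mod_cast Nat.ofNat_le_cast.mpr hs0
    have := add_le_add (h1.trans (bacfi_filt c u v 1 r hr))
      (h0.trans (bacfi_filt c u v 0 g hg))
    linarith
  · obtain ⟨v, hv, hs0, hs1⟩ := hred j hj
    refine le_trans ?_ (bacfi_vecMul_ge A u hu j v hv)
    refine le_trans ?_ (bacfi_two_sets c u v hu 0 1 (by decide))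
    have h0 : g * 3 ≤ g * (∑ i ∈ univ.filter (fun i => c i = 0), (v i : ℚ)) := by
      apply mul_le_mul_of_nonneg_left _ hg0
      exact_mod_cast Nat.ofNat_le_cast.mpr hs0
    have h1 : r * 2 ≤ r * (∑ i ∈ univ.filter (fun i => c i = 1), (v i : ℚ)) := by
      apply mul_le_mul_of_nonneg_left _ hr0
      exact_mod_cast Nat.ofNat_le_cast.mpr hs1
    have := add_le_add (h0.trans (bacfi_filt c u v 0 g hg))
      (h1.trans (bacfi_filt c u v 1 r hr))
    linarith

lemma bacfi_nonneg {n : ℕ} {c : Fin n → Fin 3} {A : Matrix (Fin n) (Fin n) ℚ}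
    (hA : BacfiColCond c A) (i j : Fin n) : 0 ≤ A i j := by
  obtain ⟨m, hm⟩ := hA.1 i j
  rw [hm]; positivity

lemma bacfiWeight_nonneg {n : ℕ} (c : Fin n → Fin 3) (i : Fin n) :
    0 ≤ bacfiWeight c i := by
  unfold bacfiWeight; split <;> norm_num

/-- A single matrix satisfying the column conditions need not expand the weight
vector `w` by `5/2`, but the product of two such matrices always does. -/
theorem stmt17 :
    (∃ (n : ℕ) (c : Fin n → Fin 3) (M : Matrix (Fin n) (Fin n) ℚ),
      BacfiColCond c M ∧
      ¬ ∀ j, (5 / 2 : ℚ) * bacfiWeight c j ≤ Matrix.vecMul (bacfiWeight c) M j) ∧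
    (∀ (n : ℕ) (c : Fin n → Fin 3) (A B : Matrix (Fin n) (Fin n) ℚ),
      BacfiColCond c A → BacfiColCond c B →
      ∀ j, (5 / 2 : ℚ) * bacfiWeight c j ≤ Matrix.vecMul (bacfiWeight c) (B * A) j) := by
  constructor
  · refine ⟨3, ![0, 1, 2], ![![0, 3, 2], ![0, 2, 1], ![1, 0, 0]], ⟨?_, ?_, ?_, ?_⟩, ?_⟩
    · intro i j
      fin_cases i <;> fin_cases j
      · exact ⟨0, by norm_num⟩
      · exact ⟨3, by norm_num⟩
      · exact ⟨2, by norm_num⟩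
      · exact ⟨0, by norm_num⟩
      · exact ⟨2, by norm_num⟩
      · exact ⟨1, by norm_num⟩
      · exact ⟨1, by norm_num⟩
      · exact ⟨0, by norm_num⟩
      · exact ⟨0, by norm_num⟩
    · intro j hj
      fin_cases j
      · exact ⟨![0, 0, 1], by intro i; fin_cases i <;> norm_num, by decide⟩
      · simp at hj
      · simp at hj
    · intro j hj
      fin_cases j
      · simp at hj
      · simp at hj
      · exact ⟨![2, 1, 0], by intro i; fin_cases i <;> norm_num, by decide, by decide⟩
    · intro j hj
      fin_cases j
      · simp at hj
      · exact ⟨![3, 2, 0], by intro i; fin_cases i <;> norm_num, by decide, by decide⟩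
      · simp at hj
    · intro h
      have := h 0
      simp [Matrix.vecMul, dotProduct, bacfiWeight, Fin.sum_univ_three] at this
  · intro n c A B hA hB j
    set w := bacfiWeight c with hw
    set u := Matrix.vecMul w B with hu
    have hw0 : ∀ i, 0 ≤ w i := bacfiWeight_nonneg c
    have hwg : ∀ i, c i = 0 → (2 : ℚ) ≤ w i := by
      intro i hi; simp [hw, bacfiWeight, hi]
    have hwr : ∀ i, c i = 1 → (1 : ℚ) ≤ w i := by
      intro i hi; simp [hw, bacfiWeight, hi]
    have hwb : ∀ i, c i = 2 → (1 : ℚ) ≤ w i := by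
      intro i hi; simp [hw, bacfiWeight, hi]
    have hstepB := fun i => bacfi_step c B hB w hw0 2 1 1 (by norm_num) (by norm_num)
      (by norm_num) hwg hwr hwb i
    have hu0 : ∀ i, 0 ≤ u i := by
      intro i
      simp only [hu, Matrix.vecMul, dotProduct]
      exact Finset.sum_nonneg fun k _ => mul_nonneg (hw0 k) (bacfi_nonneg hB k i)
    have hug : ∀ i, c i = 0 → (1 : ℚ) ≤ u i := fun i hi => (hstepB i).1 hi
    have hur : ∀ i, c i = 1 → (8 : ℚ) ≤ u i := by
      intro i hi
      have := (hstepB i).2.2 hi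
      linarith
    have hub : ∀ i, c i = 2 → (5 : ℚ) ≤ u i := by
      intro i hi
      have := (hstepB i).2.1 hi
      linarith
    have hstepA := bacfi_step c A hA u hu0 1 8 5 (by norm_num) (by norm_num)
      (by norm_num) hug hur hub j
    have hassoc : Matrix.vecMul w (B * A) = Matrix.vecMul u A := by
      rw [hu, Matrix.vecMul_vecMul]
    rw [hassoc]
    have h3 : ∀ x : Fin 3, x = 0 ∨ x = 1 ∨ x = 2 := by decide
    rcases h3 (c j) with h | h | h
    · have := hstepA.1 h
      have hwj : w j = 2 := by simp [hw, bacfiWeight, h]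
      rw [hwj]; linarith
    · have := hstepA.2.2 h
      have hwj : w j = 1 := by simp [hw, bacfiWeight]; rw [h]; decide
      rw [hwj]; linarith
    · have := hstepA.2.1 h
      have hwj : w j = 1 := by simp [hw, bacfiWeight]; rw [h]; decide
      rw [hwj]; linarith
end
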